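/- Let X be a random element of ℝ^p on a probability space, and let C be a map from ℝ^p to Borel subsets of ℝ such that (x, y) ↦ 1{y ∈ C(x)} is jointly measurable. If there exists α ∈ [0,1) such that P(y ∈ C(X)) ≥ 1 − α for every y ∈ ℝ, then E[length(C(X))] = ∞; indeed E[length(C(X))] = ∫_ℝ P(y ∈ C(X)) dy. -/
import Mathlib


/-!
STATEMENT 12: A set-valued map that covers every fixed real number with probability at least
`1 − α` (for some `α < 1`) must have infinite expected Lebesgue length; indeed, the expected
length equals the integral over `y` of the coverage probability of `y` (Fubini).
-/

open MeasureTheory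

noncomputable section

/-- Let `X` be a random element of `ℝ^p` and `C` a set-valued map with
jointly measurable indicator. If there is `α ∈ [0,1)` with `P(y ∈ C(X)) ≥ 1 − α` for every
`y ∈ ℝ`, then `E[length(C(X))] = ∞`; indeed
`E[length(C(X))] = ∫_ℝ P(y ∈ C(X)) dy`. -/
theorem infinite_expected_length_of_uniform_coverage
    {Ω : Type*} [MeasurableSpace Ω]
    (P : Measure Ω) [IsProbabilityMeasure P] {p : ℕ}
    (X : Ω → Fin p → ℝ) (hX : Measurable X)
    (C : (Fin p → ℝ) → Set ℝ)
    (hC : MeasurableSet {q : (Fin p → ℝ) × ℝ | q.2 ∈ C q.1})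
    (α : ℝ) (hα : α ∈ Set.Ico (0 : ℝ) 1)
    (hcov : ∀ y : ℝ, ENNReal.ofReal (1 - α) ≤ P {ω | y ∈ C (X ω)}) :
    ∫⁻ ω, volume (C (X ω)) ∂P = ⊤ ∧
      ∫⁻ ω, volume (C (X ω)) ∂P = ∫⁻ y, P {ω | y ∈ C (X ω)} ∂(volume : Measure ℝ) := by
  -- measurability of the indicator on Ω × ℝ
  have hmeas : Measurable fun q : Ω × ℝ =>
      Set.indicator {q : (Fin p → ℝ) × ℝ | q.2 ∈ C q.1} (fun _ => (1 : ENNReal))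
        (X q.1, q.2) := by
    exact (measurable_const.indicator hC).comp ((hX.comp measurable_fst).prodMk measurable_snd)
  have hsliceX : ∀ ω, MeasurableSet (C (X ω)) := fun ω =>
    measurable_prodMk_left hC
  have fubini : ∫⁻ ω, volume (C (X ω)) ∂P
      = ∫⁻ y, P {ω | y ∈ C (X ω)} ∂(volume : Measure ℝ) := by
    have h1 : ∀ ω, volume (C (X ω))
        = ∫⁻ y, Set.indicator {q : (Fin p → ℝ) × ℝ | q.2 ∈ C q.1}
            (fun _ => (1 : ENNReal)) (X ω, y) ∂(volume : Measure ℝ) := by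
      intro ω
      rw [← lintegral_indicator_one (hsliceX ω)]
      rfl
    have h2 : ∀ y, P {ω | y ∈ C (X ω)}
        = ∫⁻ ω, Set.indicator {q : (Fin p → ℝ) × ℝ | q.2 ∈ C q.1}
            (fun _ => (1 : ENNReal)) (X ω, y) ∂P := by
      intro y
      have hset : MeasurableSet {ω | y ∈ C (X ω)} := by
        have : {ω | y ∈ C (X ω)} = (fun ω => (X ω, y)) ⁻¹' {q : (Fin p → ℝ) × ℝ | q.2 ∈ C q.1} :=
          rfl
        rw [this]
        exact hC.preimage (hX.prodMk measurable_const)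
      rw [← lintegral_indicator_one hset]
      rfl
    simp_rw [h1, h2]
    exact lintegral_lintegral_swap hmeas.aemeasurable
  refine ⟨?_, fubini⟩
  rw [fubini]
  have hc : (0 : ENNReal) < ENNReal.ofReal (1 - α) := by
    rw [ENNReal.ofReal_pos]; linarith [hα.2]
  have hle : ∫⁻ _ : ℝ, ENNReal.ofReal (1 - α) ∂(volume : Measure ℝ)
      ≤ ∫⁻ y, P {ω | y ∈ C (X ω)} ∂(volume : Measure ℝ) :=
    lintegral_mono fun y => hcov y
  rw [lintegral_const] at hle
  have : ENNReal.ofReal (1 - α) * volume (Set.univ : Set ℝ) = ⊤ := by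
    simp [Real.volume_univ, ENNReal.mul_top hc.ne']
  rw [this] at hle
  exact top_le_iff.mp hle

end
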